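/- arXiv:1206.5508 — 3 statements merged into one kernel-verified Lean document; each statement's English description precedes it below -/
import Mathlib

section
/- Let X be a symmetric matrix and U, W real matrices of compatible dimensions. Then X + U V W + W^T V^T U^T is negative definite for every matrix V satisfying V^T V ≤ I if and only if there exists a scalar ε > 0 such that X + ε U U^T + ε^{-1} W^T W is negative definite. -/
open Matrix Set Filter Topology

namespace PetersenAux

variable {n : ℕ}

lemma dot_self_nonneg {m : ℕ} (u : Fin m → ℝ) : 0 ≤ u ⬝ᵥ u :=
  Finset.sum_nonneg fun i _ => mul_self_nonneg (u i)

lemma dot_self_pos {m : ℕ} {u : Fin m → ℝ} (hu : u ≠ 0) : 0 < u ⬝ᵥ u :=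
  lt_of_le_of_ne (dot_self_nonneg u) fun h => hu (dotProduct_self_eq_zero.mp h.symm)

lemma dot_symm (S : Matrix (Fin n) (Fin n) ℝ) (hS : Sᵀ = S) (x y : Fin n → ℝ) :
    x ⬝ᵥ S *ᵥ y = y ⬝ᵥ S *ᵥ x := by
  rw [dotProduct_mulVec, ← mulVec_transpose, hS, dotProduct_comm]

lemma quad_smul (S : Matrix (Fin n) (Fin n) ℝ) (x : Fin n → ℝ) (a : ℝ) :
    (a • x) ⬝ᵥ S *ᵥ (a • x) = a ^ 2 * (x ⬝ᵥ S *ᵥ x) := by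
  rw [mulVec_smul, dotProduct_smul, smul_dotProduct]
  simp [smul_eq_mul]; ring

lemma quad_expand (S : Matrix (Fin n) (Fin n) ℝ) (hS : Sᵀ = S) (x y : Fin n → ℝ) (s t : ℝ) :
    (s • x + t • y) ⬝ᵥ S *ᵥ (s • x + t • y)
      = s ^ 2 * (x ⬝ᵥ S *ᵥ x) + 2 * s * t * (x ⬝ᵥ S *ᵥ y) + t ^ 2 * (y ⬝ᵥ S *ᵥ y) := by
  have h : y ⬝ᵥ S *ᵥ x = x ⬝ᵥ S *ᵥ y := dot_symm S hS y x
  rw [mulVec_add, mulVec_smul, mulVec_smul, dotProduct_add, add_dotProduct, add_dotProduct,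
    dotProduct_smul, dotProduct_smul, dotProduct_smul, dotProduct_smul,
    smul_dotProduct, smul_dotProduct, smul_dotProduct, smul_dotProduct]
  simp only [smul_eq_mul]
  rw [h]; ring

lemma cont_quad (S : Matrix (Fin n) (Fin n) ℝ) :
    Continuous fun v : Fin n → ℝ => v ⬝ᵥ S *ᵥ v := by
  have : (fun v : Fin n → ℝ => v ⬝ᵥ S *ᵥ v)
      = fun v => ∑ i, v i * ∑ j, S i j * v j := rfl
  rw [this]
  exact continuous_finset_sum _ fun i _ =>
    (continuous_apply i).mul (continuous_finset_sum _ fun j _ =>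
      continuous_const.mul (continuous_apply j))

lemma vecMulVec_mulVec {m k : ℕ} (u : Fin m → ℝ) (w : Fin k → ℝ) (y : Fin k → ℝ) :
    vecMulVec u w *ᵥ y = (w ⬝ᵥ y) • u := by
  ext i
  simp only [mulVec, vecMulVec_apply, dotProduct, Pi.smul_apply, smul_eq_mul]
  rw [Finset.sum_mul]
  exact Finset.sum_congr rfl fun j _ => by ring

set_option maxHeartbeats 2000000 in
lemma petersen_key (C P Q : Matrix (Fin n) (Fin n) ℝ)
    (hC : Cᵀ = C) (hP : Pᵀ = P) (hQ : Qᵀ = Q)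
    (hPnn : ∀ v, 0 ≤ v ⬝ᵥ P *ᵥ v) (hQnn : ∀ v, 0 ≤ v ⬝ᵥ Q *ᵥ v)
    (h : ∀ v : Fin n → ℝ, v ≠ 0 →
      v ⬝ᵥ C *ᵥ v + 2 * Real.sqrt ((v ⬝ᵥ P *ᵥ v) * (v ⬝ᵥ Q *ᵥ v)) < 0) :
    ∃ ε : ℝ, 0 < ε ∧ ∀ v : Fin n → ℝ, v ≠ 0 →
      v ⬝ᵥ C *ᵥ v + ε * (v ⬝ᵥ P *ᵥ v) + ε⁻¹ * (v ⬝ᵥ Q *ᵥ v) < 0 := by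
  set c : (Fin n → ℝ) → ℝ := fun v => v ⬝ᵥ C *ᵥ v with hc_def
  set A : (Fin n → ℝ) → ℝ := fun v => v ⬝ᵥ P *ᵥ v with hA_def
  set B : (Fin n → ℝ) → ℝ := fun v => v ⬝ᵥ Q *ᵥ v with hB_def
  have hAnn : ∀ v, 0 ≤ A v := hPnn
  have hBnn : ∀ v, 0 ≤ B v := hQnn
  have hcneg : ∀ v : Fin n → ℝ, v ≠ 0 → c v < 0 := by
    intro v hv
    have := h v hv
    have h2 := Real.sqrt_nonneg (A v * B v)
    linarith
  have hdisc : ∀ v : Fin n → ℝ, v ≠ 0 → 4 * A v * B v < c v ^ 2 := by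
    intro v hv
    have h1 := h v hv
    have h2 := Real.sqrt_nonneg (A v * B v)
    have h3 : Real.sqrt (A v * B v) ^ 2 = A v * B v :=
      Real.sq_sqrt (mul_nonneg (hAnn v) (hBnn v))
    nlinarith
  have unit_ne : ∀ v : Fin n → ℝ, ‖v‖ = 1 → v ≠ 0 := by
    intro v hv h0
    rw [h0] at hv; simp at hv
  by_contra hcon
  push_neg at hcon
  -- witnesses on the unit sphere
  have hW : ∀ ε : ℝ, 0 < ε → ∃ v, ‖v‖ = 1 ∧ 0 ≤ A v * ε ^ 2 + c v * ε + B v := by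
    intro ε hε
    obtain ⟨v, hv0, hvge⟩ := hcon ε hε
    have hεne : ε ≠ 0 := ne_of_gt hε
    have hkey : ε * (c v + ε * A v + ε⁻¹ * B v) = A v * ε ^ 2 + c v * ε + B v := by
      field_simp; ring
    have hnv : ‖v‖ ≠ 0 := norm_ne_zero_iff.mpr hv0
    refine ⟨‖v‖⁻¹ • v, ?_, ?_⟩
    · rw [norm_smul, norm_inv, norm_norm, inv_mul_cancel₀ hnv]
    · have hsc : ∀ S : Matrix (Fin n) (Fin n) ℝ,
          (‖v‖⁻¹ • v) ⬝ᵥ S *ᵥ (‖v‖⁻¹ • v) = (‖v‖⁻¹) ^ 2 * (v ⬝ᵥ S *ᵥ v) :=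
        fun S => quad_smul S v _
      have : A (‖v‖⁻¹ • v) * ε ^ 2 + c (‖v‖⁻¹ • v) * ε + B (‖v‖⁻¹ • v)
          = (‖v‖⁻¹) ^ 2 * (A v * ε ^ 2 + c v * ε + B v) := by
        simp only [hc_def, hA_def, hB_def, hsc]; ring
      rw [this, ← hkey]
      positivity
  obtain ⟨v₀, hv₀, _⟩ := hW 1 one_pos
  have hne : (Metric.sphere (0 : Fin n → ℝ) 1).Nonempty :=
    ⟨v₀, by simpa [mem_sphere_zero_iff_norm] using hv₀⟩
  have hcc : Continuous c := cont_quad C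
  have hAc : Continuous A := cont_quad P
  have hBc : Continuous B := cont_quad Q
  obtain ⟨zc, hzc_mem, hzc⟩ :=
    (isCompact_sphere (0 : Fin n → ℝ) 1).exists_isMaxOn hne hcc.continuousOn
  obtain ⟨zA, hzA_mem, hzA⟩ :=
    (isCompact_sphere (0 : Fin n → ℝ) 1).exists_isMaxOn hne hAc.continuousOn
  obtain ⟨zB, hzB_mem, hzB⟩ :=
    (isCompact_sphere (0 : Fin n → ℝ) 1).exists_isMaxOn hne hBc.continuousOn
  set γ : ℝ := -(c zc) with hγ_def
  have hγpos : 0 < γ := by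
    have := hcneg zc (unit_ne zc (mem_sphere_zero_iff_norm.mp hzc_mem))
    simpa [hγ_def] using this
  have hcle : ∀ v : Fin n → ℝ, ‖v‖ = 1 → c v ≤ -γ := by
    intro v hv
    have := hzc (mem_sphere_zero_iff_norm.mpr hv)
    simpa [hγ_def] using this
  set Amax : ℝ := A zA with hAmax_def
  have hAmaxnn : 0 ≤ Amax := hAnn zA
  have hAle : ∀ v : Fin n → ℝ, ‖v‖ = 1 → A v ≤ Amax := by
    intro v hv; exact hzA (mem_sphere_zero_iff_norm.mpr hv)
  set Bmax : ℝ := B zB with hBmax_def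
  have hBmaxnn : 0 ≤ Bmax := hBnn zB
  have hBle : ∀ v : Fin n → ℝ, ‖v‖ = 1 → B v ≤ Bmax := by
    intro v hv; exact hzB (mem_sphere_zero_iff_norm.mpr hv)
  -- the two closed sets
  have key_closed : ∀ F : ℝ → (Fin n → ℝ) → ℝ,
      Continuous (fun pr : ℝ × (Fin n → ℝ) => F pr.1 pr.2) →
      IsClosed {ε : ℝ | ∃ v, ‖v‖ = 1 ∧ 0 ≤ F ε v} := by
    intro F hF
    apply IsSeqClosed.isClosed
    intro xs ε hmem htend
    choose vs hvs hFv using hmem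
    have hvmem : ∀ k, vs k ∈ Metric.sphere (0 : Fin n → ℝ) 1 :=
      fun k => mem_sphere_zero_iff_norm.mpr (hvs k)
    obtain ⟨v, hvm, φ, hφ, hvtend⟩ :=
      (isCompact_sphere (0 : Fin n → ℝ) 1).tendsto_subseq hvmem
    refine ⟨v, mem_sphere_zero_iff_norm.mp hvm, ?_⟩
    have h1 : Tendsto (fun k => (xs (φ k), vs (φ k))) atTop (𝓝 (ε, v)) :=
      ((htend.comp hφ.tendsto_atTop).prodMk_nhds hvtend)
    have h2 : Tendsto (fun k => F (xs (φ k)) (vs (φ k))) atTop (𝓝 (F ε v)) :=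
      (hF.tendsto _).comp h1
    exact ge_of_tendsto h2 (Eventually.of_forall fun k => hFv (φ k))
  set TL : Set ℝ := {ε : ℝ | ∃ v, ‖v‖ = 1 ∧
    0 ≤ min (A v * ε ^ 2 + c v * ε + B v) (-(2 * A v * ε + c v))} with hTL_def
  set TR : Set ℝ := {ε : ℝ | ∃ v, ‖v‖ = 1 ∧
    0 ≤ min (A v * ε ^ 2 + c v * ε + B v) (2 * A v * ε + c v)} with hTR_def
  have hA2 : Continuous fun pr : ℝ × (Fin n → ℝ) => A pr.2 := hAc.comp continuous_snd
  have hc2 : Continuous fun pr : ℝ × (Fin n → ℝ) => c pr.2 := hcc.comp continuous_snd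
  have hB2 : Continuous fun pr : ℝ × (Fin n → ℝ) => B pr.2 := hBc.comp continuous_snd
  have contTL : Continuous fun pr : ℝ × (Fin n → ℝ) =>
      min (A pr.2 * pr.1 ^ 2 + c pr.2 * pr.1 + B pr.2) (-(2 * A pr.2 * pr.1 + c pr.2)) :=
    (((hA2.mul (continuous_fst.pow 2)).add (hc2.mul continuous_fst)).add hB2).min
      (((continuous_const.mul hA2).mul continuous_fst).add hc2).neg
  have contTR : Continuous fun pr : ℝ × (Fin n → ℝ) =>
      min (A pr.2 * pr.1 ^ 2 + c pr.2 * pr.1 + B pr.2) (2 * A pr.2 * pr.1 + c pr.2) :=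
    (((hA2.mul (continuous_fst.pow 2)).add (hc2.mul continuous_fst)).add hB2).min
      (((continuous_const.mul hA2).mul continuous_fst).add hc2)
  have hTLclosed : IsClosed TL := key_closed _ contTL
  have hTRclosed : IsClosed TR := key_closed _ contTR
  have hcover : Set.Ioi (0:ℝ) ⊆ TL ∪ TR := by
    intro ε hε
    obtain ⟨v, hv, hq⟩ := hW ε hε
    rcases le_total (2 * A v * ε + c v) 0 with hd | hd
    · exact Or.inl ⟨v, hv, le_min hq (neg_nonneg.mpr hd)⟩
    · exact Or.inr ⟨v, hv, le_min hq hd⟩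
  have htp : ∀ ε : ℝ, 0 < ε → ε ∈ TL → ε ∈ TR → False := by
    intro ε hε hL hR
    obtain ⟨x, hxu, hx⟩ := hL
    obtain ⟨y, hyu, hy⟩ := hR
    obtain ⟨hQx, hDx'⟩ := le_min_iff.mp hx
    have hDx : 2 * A x * ε + c x ≤ 0 := by linarith
    obtain ⟨hQy, hDy⟩ := le_min_iff.mp hy
    have hxne := unit_ne x hxu
    have hyne := unit_ne y hyu
    have ptw : ∀ z : Fin n → ℝ, z ≠ 0 → 2 * A z * ε + c z = 0 →
        A z * ε ^ 2 + c z * ε + B z < 0 := by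
      intro z hz hD
      have hcz := hcneg z hz
      have hAz : 0 < A z := by
        rcases lt_or_eq_of_le (hAnn z) with h' | h'
        · exact h'
        · exfalso
          rw [← h'] at hD
          simp only [mul_zero, zero_mul, zero_add] at hD
          linarith
      have hdz := hdisc z hz
      have hcz2 : c z = -(2 * A z * ε) := by linarith
      rw [hcz2] at hdz ⊢
      have hBz : B z < A z * ε ^ 2 := by nlinarith
      nlinarith
    have indep : ∀ s t : ℝ, ¬(s = 0 ∧ t = 0) → s • x + t • y ≠ 0 := by
      intro s t hst h0
      by_cases ht : t = 0
      · have hs : s ≠ 0 := fun hs => hst ⟨hs, ht⟩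
        rw [ht, zero_smul, add_zero] at h0
        exact hxne (by simpa [smul_eq_zero, hs] using h0)
      · have hty : t • y = -(s • x) := by
          rw [add_comm] at h0
          rwa [add_eq_zero_iff_eq_neg] at h0
        have hy2 : y = (-(t⁻¹ * s)) • x := by
          calc y = t⁻¹ • (t • y) := by rw [smul_smul, inv_mul_cancel₀ ht, one_smul]
          _ = t⁻¹ • (-(s • x)) := by rw [hty]
          _ = (-(t⁻¹ * s)) • x := by rw [smul_neg, smul_smul, ← neg_smul]
        have ha : (-(t⁻¹ * s)) ≠ 0 := by
          intro h'
          rw [h', zero_smul] at hy2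
          exact hyne hy2
        have hDy2 : 2 * A y * ε + c y = (-(t⁻¹ * s)) ^ 2 * (2 * A x * ε + c x) := by
          rw [hy2]
          simp only [hA_def, hc_def, quad_smul]
          ring
        have ha2 : 0 < (-(t⁻¹ * s)) ^ 2 := by positivity
        have hDx0 : 2 * A x * ε + c x = 0 := by nlinarith
        have := ptw x hxne hDx0
        linarith
    -- path 1 : from x to y
    have hpcont : ∀ w₁ w₂ : Fin n → ℝ, Continuous fun t : ℝ => (1 - t) • w₁ + t • w₂ :=
      fun w₁ w₂ => (((continuous_const.sub continuous_id).smul continuous_const).add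
        (continuous_id.smul continuous_const))
    have cont1 : Continuous fun t : ℝ =>
        2 * A ((1 - t) • x + t • y) * ε + c ((1 - t) • x + t • y) :=
      ((continuous_const.mul (hAc.comp (hpcont x y))).mul continuous_const).add
        (hcc.comp (hpcont x y))
    have h0mem1 : (0:ℝ) ∈ Icc (2 * A ((1 - (0:ℝ)) • x + (0:ℝ) • y) * ε + c ((1 - (0:ℝ)) • x + (0:ℝ) • y))
        (2 * A ((1 - (1:ℝ)) • x + (1:ℝ) • y) * ε + c ((1 - (1:ℝ)) • x + (1:ℝ) • y)) := by
      simp only [sub_zero, one_smul, zero_smul, add_zero, sub_self, zero_add]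
      exact ⟨hDx, hDy⟩
    obtain ⟨t₁, ht₁mem, hft₁⟩ :=
      intermediate_value_Icc (zero_le_one) cont1.continuousOn h0mem1
    have hft₁ : 2 * A ((1 - t₁) • x + t₁ • y) * ε + c ((1 - t₁) • x + t₁ • y) = 0 := hft₁
    have ht₁0 : t₁ ≠ 0 := by
      intro h'
      rw [h'] at hft₁
      simp only [sub_zero, one_smul, zero_smul, add_zero] at hft₁
      have := ptw x hxne hft₁
      linarith
    have ht₁1 : t₁ ≠ 1 := by
      intro h'
      rw [h'] at hft₁
      simp only [sub_self, zero_smul, one_smul, zero_add] at hft₁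
      have := ptw y hyne hft₁
      linarith
    have ht₁pos : 0 < t₁ := lt_of_le_of_ne ht₁mem.1 (Ne.symm ht₁0)
    have ht₁lt : t₁ < 1 := lt_of_le_of_ne ht₁mem.2 ht₁1
    have hz₁ne : (1 - t₁) • x + t₁ • y ≠ 0 :=
      indep _ _ (fun hc' => ht₁0 hc'.2)
    have hQz₁ := ptw _ hz₁ne hft₁
    -- path 2 : from y to -x
    have cont2 : Continuous fun t : ℝ =>
        2 * A ((-t) • x + (1 - t) • y) * ε + c ((-t) • x + (1 - t) • y) := by
      have hp : Continuous fun t : ℝ => (-t) • x + (1 - t) • y :=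
        ((continuous_id.neg.smul continuous_const).add
          ((continuous_const.sub continuous_id).smul continuous_const))
      exact ((continuous_const.mul (hAc.comp hp)).mul continuous_const).add (hcc.comp hp)
    have hAnegx : A ((-(1:ℝ)) • x) = A x := by
      simp only [hA_def, quad_smul]; ring
    have hcnegx : c ((-(1:ℝ)) • x) = c x := by
      simp only [hc_def, quad_smul]; ring
    have h0mem2 : (0:ℝ) ∈ Icc (2 * A ((-(1:ℝ)) • x + (1 - (1:ℝ)) • y) * ε + c ((-(1:ℝ)) • x + (1 - (1:ℝ)) • y))
        (2 * A ((-(0:ℝ)) • x + (1 - (0:ℝ)) • y) * ε + c ((-(0:ℝ)) • x + (1 - (0:ℝ)) • y)) := by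
      simp only [sub_self, zero_smul, add_zero, neg_zero, sub_zero, one_smul, zero_add]
      rw [hAnegx, hcnegx]
      exact ⟨hDx, hDy⟩
    obtain ⟨t₂, ht₂mem, hft₂⟩ :=
      intermediate_value_Icc' (zero_le_one) cont2.continuousOn h0mem2
    have hft₂ : 2 * A ((-t₂) • x + (1 - t₂) • y) * ε + c ((-t₂) • x + (1 - t₂) • y) = 0 := hft₂
    have ht₂0 : t₂ ≠ 0 := by
      intro h'
      rw [h'] at hft₂
      simp only [neg_zero, zero_smul, sub_zero, one_smul, zero_add] at hft₂
      have := ptw y hyne hft₂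
      linarith
    have ht₂1 : t₂ ≠ 1 := by
      intro h'
      rw [h'] at hft₂
      simp only [sub_self, zero_smul, add_zero] at hft₂
      rw [hAnegx, hcnegx] at hft₂
      have := ptw x hxne hft₂
      linarith
    have ht₂pos : 0 < t₂ := lt_of_le_of_ne ht₂mem.1 (Ne.symm ht₂0)
    have ht₂lt : t₂ < 1 := lt_of_le_of_ne ht₂mem.2 ht₂1
    have hz₂ne : (-t₂) • x + (1 - t₂) • y ≠ 0 :=
      indep _ _ (fun hc' => ht₂0 (by linarith [hc'.1, hc'.2] : t₂ = 0))
    have hQz₂ := ptw _ hz₂ne hft₂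
    -- expansion
    set κ : ℝ := ε ^ 2 * (x ⬝ᵥ P *ᵥ y) + ε * (x ⬝ᵥ C *ᵥ y) + (x ⬝ᵥ Q *ᵥ y) with hκ_def
    have hexp : ∀ s t : ℝ,
        A (s • x + t • y) * ε ^ 2 + c (s • x + t • y) * ε + B (s • x + t • y)
        = s ^ 2 * (A x * ε ^ 2 + c x * ε + B x) + 2 * s * t * κ
          + t ^ 2 * (A y * ε ^ 2 + c y * ε + B y) := by
      intro s t
      simp only [hA_def, hc_def, hB_def, hκ_def]
      rw [quad_expand P hP, quad_expand C hC, quad_expand Q hQ]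
      ring
    rw [hexp] at hQz₁ hQz₂
    have hκneg : κ < 0 := by
      nlinarith [mul_pos (by linarith : (0:ℝ) < 1 - t₁) ht₁pos,
        mul_nonneg (sq_nonneg (1 - t₁)) hQx, mul_nonneg (sq_nonneg t₁) hQy]
    have hκpos : 0 < κ := by
      nlinarith [mul_pos ht₂pos (by linarith : (0:ℝ) < 1 - t₂),
        mul_nonneg (sq_nonneg t₂) hQx, mul_nonneg (sq_nonneg (1 - t₂)) hQy]
    linarith
  -- endgame
  by_cases hTLne : (Set.Ioi (0:ℝ) ∩ TL).Nonempty
  · by_cases hTRne : (Set.Ioi (0:ℝ) ∩ TR).Nonempty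
    · obtain ⟨ε, hmem⟩ := isPreconnected_closed_iff.mp isPreconnected_Ioi TL TR
        hTLclosed hTRclosed hcover hTLne hTRne
      exact htp ε hmem.1 hmem.2.1 hmem.2.2
    · -- every ε > 0 lies in TL : contradiction for large ε
      have hγne : γ ≠ 0 := ne_of_gt hγpos
      obtain ⟨ε1, hε1pos, hγε⟩ : ∃ e : ℝ, 0 < e ∧ γ * e = 2 * Bmax + γ :=
        ⟨(2 * Bmax + γ) / γ, div_pos (by linarith) hγpos, mul_div_cancel₀ _ hγne⟩
      have hmem : ε1 ∈ TL := by
        rcases hcover (mem_Ioi.mpr hε1pos) with hL | hR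
        · exact hL
        · exact absurd ⟨ε1, mem_Ioi.mpr hε1pos, hR⟩ hTRne
      obtain ⟨v, hv, hmin⟩ := hmem
      obtain ⟨hq, hd'⟩ := le_min_iff.mp hmin
      have hd : 2 * A v * ε1 + c v ≤ 0 := by linarith
      have hBv := hBle v hv
      have hcv := hcle v hv
      nlinarith [mul_nonpos_of_nonpos_of_nonneg hd hε1pos.le,
        mul_le_mul_of_nonneg_right hcv hε1pos.le]
  · -- every ε > 0 lies in TR : contradiction for small ε
    have hden : (0:ℝ) < 2 * Amax + 1 := by linarith
    obtain ⟨ε0, hε0pos, hε0eq⟩ : ∃ e : ℝ, 0 < e ∧ e * (2 * Amax + 1) = γ :=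
      ⟨γ / (2 * Amax + 1), div_pos hγpos hden, div_mul_cancel₀ _ (ne_of_gt hden)⟩
    have hmem : ε0 ∈ TR := by
      rcases hcover (mem_Ioi.mpr hε0pos) with hL | hR
      · exact absurd ⟨ε0, mem_Ioi.mpr hε0pos, hL⟩ hTLne
      · exact hR
    obtain ⟨v, hv, hmin⟩ := hmem
    obtain ⟨hq, hd⟩ := le_min_iff.mp hmin
    have hAv := hAle v hv
    have hcv := hcle v hv
    nlinarith [mul_nonneg (sub_nonneg.mpr hAv) hε0pos.le]

lemma star_real {m : ℕ} (x : Fin m → ℝ) : star x = x :=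
  funext fun i => by simp

end PetersenAux

open PetersenAux in
theorem petersen_lemma {n p q : ℕ}
    (X : Matrix (Fin n) (Fin n) ℝ) (hX : X.IsSymm)
    (U : Matrix (Fin n) (Fin p) ℝ) (W : Matrix (Fin q) (Fin n) ℝ) :
    (∀ V : Matrix (Fin p) (Fin q) ℝ, ((1 : Matrix (Fin q) (Fin q) ℝ) - Vᵀ * V).PosSemidef →
        (-(X + U * V * W + Wᵀ * Vᵀ * Uᵀ)).PosDef) ↔
      ∃ ε : ℝ, 0 < ε ∧ (-(X + ε • (U * Uᵀ) + ε⁻¹ • (Wᵀ * W))).PosDef := by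
  have hXt : Xᵀ = X := hX
  have hPt : (U * Uᵀ)ᵀ = U * Uᵀ := by rw [transpose_mul, transpose_transpose]
  have hQt : (Wᵀ * W)ᵀ = Wᵀ * W := by rw [transpose_mul, transpose_transpose]
  have hAB : ∀ v : Fin n → ℝ, v ⬝ᵥ (U * Uᵀ) *ᵥ v = (v ᵥ* U) ⬝ᵥ (v ᵥ* U) := by
    intro v
    rw [← mulVec_mulVec, dotProduct_mulVec, mulVec_transpose]
  have hBB : ∀ v : Fin n → ℝ, v ⬝ᵥ (Wᵀ * W) *ᵥ v = (W *ᵥ v) ⬝ᵥ (W *ᵥ v) := by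
    intro v
    rw [← mulVec_mulVec, dotProduct_mulVec, vecMul_transpose]
  have hherm : ∀ M : Matrix (Fin n) (Fin n) ℝ, Mᵀ = M → (-M).IsHermitian := by
    intro M h
    rw [Matrix.IsHermitian, conjTranspose_eq_transpose_of_trivial, transpose_neg, h]
  have hcross : ∀ (V : Matrix (Fin p) (Fin q) ℝ) (v : Fin n → ℝ),
      v ⬝ᵥ (X + U * V * W + Wᵀ * Vᵀ * Uᵀ) *ᵥ v
        = v ⬝ᵥ X *ᵥ v + 2 * ((v ᵥ* U) ⬝ᵥ (V *ᵥ (W *ᵥ v))) := by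
    intro V v
    rw [add_mulVec, add_mulVec, dotProduct_add, dotProduct_add]
    have h1 : v ⬝ᵥ (U * V * W) *ᵥ v = (v ᵥ* U) ⬝ᵥ (V *ᵥ (W *ᵥ v)) := by
      rw [← mulVec_mulVec, ← mulVec_mulVec, dotProduct_mulVec]
    have h2 : v ⬝ᵥ (Wᵀ * Vᵀ * Uᵀ) *ᵥ v = (v ᵥ* U) ⬝ᵥ (V *ᵥ (W *ᵥ v)) := by
      rw [← mulVec_mulVec, ← mulVec_mulVec, dotProduct_mulVec, vecMul_transpose,
        dotProduct_mulVec, vecMul_transpose, dotProduct_comm, dotProduct_mulVec,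
        mulVec_transpose]
      exact (dotProduct_mulVec _ V _).symm
    rw [h1, h2]; ring
  have hquad2 : ∀ (ε : ℝ) (v : Fin n → ℝ),
      v ⬝ᵥ (X + ε • (U * Uᵀ) + ε⁻¹ • (Wᵀ * W)) *ᵥ v
        = v ⬝ᵥ X *ᵥ v + ε * (v ⬝ᵥ (U * Uᵀ) *ᵥ v) + ε⁻¹ * (v ⬝ᵥ (Wᵀ * W) *ᵥ v) := by
    intro ε v
    rw [add_mulVec, add_mulVec, dotProduct_add, dotProduct_add,
      smul_mulVec, smul_mulVec, dotProduct_smul, dotProduct_smul]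
    simp [smul_eq_mul]
  constructor
  · -- hard direction
    intro hLHS
    have hsc : ∀ v : Fin n → ℝ, v ≠ 0 →
        v ⬝ᵥ X *ᵥ v + 2 * Real.sqrt ((v ⬝ᵥ (U * Uᵀ) *ᵥ v) * (v ⬝ᵥ (Wᵀ * W) *ᵥ v)) < 0 := by
      intro v hv
      set u : Fin p → ℝ := v ᵥ* U with hu_def
      set w : Fin q → ℝ := W *ᵥ v with hw_def
      have hone : ((1 : Matrix (Fin q) (Fin q) ℝ) - (0 : Matrix (Fin p) (Fin q) ℝ)ᵀ * (0 : Matrix (Fin p) (Fin q) ℝ)).PosSemidef := by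
        simpa using (Matrix.PosSemidef.one : ((1 : Matrix (Fin q) (Fin q) ℝ)).PosSemidef)
      have hczero : v ⬝ᵥ X *ᵥ v + 2 * ((v ᵥ* U) ⬝ᵥ ((0 : Matrix (Fin p) (Fin q) ℝ) *ᵥ (W *ᵥ v))) < 0 := by
        have h0 := (hLHS 0 hone).dotProduct_mulVec_pos hv
        rw [star_real, neg_mulVec, dotProduct_neg] at h0
        rw [← hcross]
        linarith
      have hcneg : v ⬝ᵥ X *ᵥ v < 0 := by
        rw [zero_mulVec, dotProduct_zero] at hczero
        linarith
      by_cases hu0 : u = 0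
      · rw [hAB, ← hu_def, hu0]
        simpa using hcneg
      by_cases hw0 : w = 0
      · rw [hBB, ← hw_def, hw0]
        simpa using hcneg
      · -- the rank one V
        have hsu : 0 < u ⬝ᵥ u := dot_self_pos hu0
        have hsw : 0 < w ⬝ᵥ w := dot_self_pos hw0
        set nu : ℝ := Real.sqrt (u ⬝ᵥ u) with hnu_def
        set nw : ℝ := Real.sqrt (w ⬝ᵥ w) with hnw_def
        have hnu2 : nu ^ 2 = u ⬝ᵥ u := Real.sq_sqrt hsu.le
        have hnw2 : nw ^ 2 = w ⬝ᵥ w := Real.sq_sqrt hsw.le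
        have hnupos : 0 < nu := Real.sqrt_pos.mpr hsu
        have hnwpos : 0 < nw := Real.sqrt_pos.mpr hsw
        set V : Matrix (Fin p) (Fin q) ℝ := (nu * nw)⁻¹ • vecMulVec u w with hV_def
        have hVy : ∀ y : Fin q → ℝ, V *ᵥ y = ((nu * nw)⁻¹ * (w ⬝ᵥ y)) • u := by
          intro y
          rw [hV_def, smul_mulVec, vecMulVec_mulVec, smul_smul]
        have hVpsd : ((1 : Matrix (Fin q) (Fin q) ℝ) - Vᵀ * V).PosSemidef := by
          refine PosSemidef.of_dotProduct_mulVec_nonneg ?_ ?_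
          · rw [Matrix.IsHermitian, conjTranspose_eq_transpose_of_trivial, transpose_sub,
              transpose_one, transpose_mul, transpose_transpose]
          · intro y
            rw [star_real, sub_mulVec, one_mulVec, dotProduct_sub]
            have hyy : y ⬝ᵥ (Vᵀ * V) *ᵥ y = (V *ᵥ y) ⬝ᵥ (V *ᵥ y) := by
              rw [← mulVec_mulVec, dotProduct_mulVec, vecMul_transpose]
            rw [hyy, hVy y, smul_dotProduct, dotProduct_smul, smul_eq_mul, smul_eq_mul]
            have hCS : (w ⬝ᵥ y) ^ 2 ≤ (w ⬝ᵥ w) * (y ⬝ᵥ y) := by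
              have h1 := Finset.sum_mul_sq_le_sq_mul_sq Finset.univ w y
              have e1 : ∑ i, w i ^ 2 = w ⬝ᵥ w := by simp [dotProduct, pow_two]
              have e2 : ∑ i, y i ^ 2 = y ⬝ᵥ y := by simp [dotProduct, pow_two]
              rw [e1, e2] at h1
              exact h1
            have hkey : (nu * nw)⁻¹ * (w ⬝ᵥ y) * ((nu * nw)⁻¹ * (w ⬝ᵥ y) * (u ⬝ᵥ u))
                = (w ⬝ᵥ y) ^ 2 / (w ⬝ᵥ w) := by
              rw [← hnu2, ← hnw2]
              field_simp [hnupos.ne', hnwpos.ne']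
            rw [hkey, sub_nonneg, div_le_iff₀ hsw]
            nlinarith [hCS]
        have hval := (hLHS V hVpsd).dotProduct_mulVec_pos hv
        rw [star_real, neg_mulVec, dotProduct_neg, hcross, ← hu_def, ← hw_def] at hval
        have hval2 : v ⬝ᵥ X *ᵥ v + 2 * (u ⬝ᵥ (V *ᵥ w)) < 0 := by linarith
        have hcrossval : u ⬝ᵥ (V *ᵥ w) = nu * nw := by
          rw [hVy w, dotProduct_smul, smul_eq_mul, ← hnu2, ← hnw2]
          field_simp [hnupos.ne', hnwpos.ne']
        rw [hAB, hBB, ← hu_def, ← hw_def]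
        have hsqrt : Real.sqrt ((u ⬝ᵥ u) * (w ⬝ᵥ w)) = nu * nw := by
          rw [Real.sqrt_mul (dot_self_nonneg u), ← hnu_def, ← hnw_def]
        rw [hsqrt]
        rw [hcrossval] at hval2
        exact hval2
    obtain ⟨ε, hε, hkey⟩ := petersen_key X (U * Uᵀ) (Wᵀ * W) hXt hPt hQt
      (fun v => by rw [hAB]; exact dot_self_nonneg _)
      (fun v => by rw [hBB]; exact dot_self_nonneg _) hsc
    refine ⟨ε, hε, PosDef.of_dotProduct_mulVec_pos ?_ ?_⟩
    · apply hherm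
      rw [transpose_add, transpose_add, transpose_smul, transpose_smul, hXt, hPt, hQt]
    · intro x hx
      rw [star_real, neg_mulVec, dotProduct_neg]
      rw [hquad2]
      exact neg_pos.mpr (hkey x hx)
  · -- easy direction
    rintro ⟨ε, hε, hPD⟩ V hV
    have e1 : (U * V * W)ᵀ = Wᵀ * Vᵀ * Uᵀ := by
      rw [transpose_mul, transpose_mul, Matrix.mul_assoc]
    have e2 : (Wᵀ * Vᵀ * Uᵀ)ᵀ = U * V * W := by
      rw [transpose_mul, transpose_mul, transpose_transpose, transpose_transpose,
        transpose_transpose, Matrix.mul_assoc]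
    have hsym1 : (X + U * V * W + Wᵀ * Vᵀ * Uᵀ)ᵀ = X + U * V * W + Wᵀ * Vᵀ * Uᵀ := by
      rw [transpose_add, transpose_add, e1, e2, hXt, add_right_comm]
    refine PosDef.of_dotProduct_mulVec_pos (hherm _ hsym1) ?_
    intro x hx
    rw [star_real, neg_mulVec, dotProduct_neg]
    rw [hcross]
    apply neg_pos.mpr
    have hq := hPD.dotProduct_mulVec_pos hx
    rw [star_real, neg_mulVec, dotProduct_neg, hquad2, hAB, hBB] at hq
    have hq' : x ⬝ᵥ X *ᵥ x + ε * ((x ᵥ* U) ⬝ᵥ (x ᵥ* U)) + ε⁻¹ * ((W *ᵥ x) ⬝ᵥ (W *ᵥ x)) < 0 := by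
      linarith
    set u : Fin p → ℝ := x ᵥ* U with hu_def
    set w : Fin q → ℝ := W *ᵥ x with hw_def
    set z : Fin p → ℝ := V *ᵥ w with hz_def
    have hs0 : Real.sqrt ε ≠ 0 := (Real.sqrt_pos.mpr hε).ne'
    have hssq : Real.sqrt ε * Real.sqrt ε = ε := Real.mul_self_sqrt hε.le
    have hexp : 0 ≤ (Real.sqrt ε • u - (Real.sqrt ε)⁻¹ • z) ⬝ᵥ
        (Real.sqrt ε • u - (Real.sqrt ε)⁻¹ • z) := dot_self_nonneg _
    have hexpand : (Real.sqrt ε • u - (Real.sqrt ε)⁻¹ • z) ⬝ᵥ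
        (Real.sqrt ε • u - (Real.sqrt ε)⁻¹ • z)
        = ε * (u ⬝ᵥ u) - 2 * (u ⬝ᵥ z) + ε⁻¹ * (z ⬝ᵥ z) := by
      simp only [sub_dotProduct, dotProduct_sub, smul_dotProduct, dotProduct_smul, smul_eq_mul]
      rw [dotProduct_comm z u, ← hssq]
      field_simp
      rw [Real.sqrt_sq (Real.sqrt_nonneg ε)]
      ring
    rw [hexpand] at hexp
    have hzw : z ⬝ᵥ z ≤ w ⬝ᵥ w := by
      have h2 := hV.dotProduct_mulVec_nonneg w
      rw [star_real, sub_mulVec, one_mulVec, dotProduct_sub] at h2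
      have hyy : w ⬝ᵥ (Vᵀ * V) *ᵥ w = z ⬝ᵥ z := by
        rw [← mulVec_mulVec, dotProduct_mulVec, vecMul_transpose, hz_def]
      rw [hyy] at h2
      linarith
    have hmono : ε⁻¹ * (z ⬝ᵥ z) ≤ ε⁻¹ * (w ⬝ᵥ w) :=
      mul_le_mul_of_nonneg_left hzw (inv_nonneg.mpr hε.le)
    linarith
end

section
/- For real matrices R1 ∈ R^{n×m}, R2 ∈ R^{m×n}, any diagonal matrix Σ ∈ R^{m×m} with |Σ| ≤ U entrywise for a positive semidefinite diagonal matrix U, and any scalar ε > 0, the matrix inequality R1 Σ R2 + R2^T Σ^T R1^T ≤ ε R1 U R1^T + ε^{-1} R2^T U R2 holds in the Loewner order. -/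
open Matrix

theorem diag_uncertainty_bound {n m : ℕ}
    (R1 : Matrix (Fin n) (Fin m) ℝ) (R2 : Matrix (Fin m) (Fin n) ℝ)
    (σ u : Fin m → ℝ) (hu : ∀ i, 0 ≤ u i) (hσ : ∀ i, |σ i| ≤ u i)
    (ε : ℝ) (hε : 0 < ε) :
    (ε • (R1 * Matrix.diagonal u * R1ᵀ) + ε⁻¹ • (R2ᵀ * Matrix.diagonal u * R2)
      - (R1 * Matrix.diagonal σ * R2 + R2ᵀ * (Matrix.diagonal σ)ᵀ * R1ᵀ)).PosSemidef := by
  rw [Matrix.posSemidef_iff_dotProduct_mulVec]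
  constructor
  · unfold Matrix.IsHermitian
    simp only [conjTranspose_eq_transpose_of_trivial, transpose_sub, transpose_add,
      transpose_smul, transpose_mul, transpose_transpose, diagonal_transpose, Matrix.mul_assoc]
    abel
  · intro x
    have key : ∀ (A : Matrix (Fin n) (Fin m) ℝ) (d : Fin m → ℝ) (B : Matrix (Fin m) (Fin n) ℝ),
        x ⬝ᵥ (A * Matrix.diagonal d * B) *ᵥ x
          = ∑ i, d i * ((Aᵀ *ᵥ x) i * (B *ᵥ x) i) := by
      intro A d B
      rw [← Matrix.mulVec_mulVec, ← Matrix.mulVec_mulVec, Matrix.dotProduct_mulVec,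
        ← Matrix.mulVec_transpose]
      simp [dotProduct, Matrix.mulVec_diagonal, mul_comm, mul_assoc, mul_left_comm]
    simp only [star_trivial, Matrix.sub_mulVec, Matrix.add_mulVec, Matrix.smul_mulVec,
      dotProduct_sub, dotProduct_add, dotProduct_smul, smul_eq_mul]
    rw [key R1 u R1ᵀ, key R2ᵀ u R2, key R1 σ R2, diagonal_transpose, key R2ᵀ σ R1ᵀ]
    rw [Finset.mul_sum, Finset.mul_sum]
    rw [← Finset.sum_add_distrib, ← Finset.sum_add_distrib, ← Finset.sum_sub_distrib]
    apply Finset.sum_nonneg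
    intro i _
    set a := (R1ᵀ *ᵥ x) i
    set b := (R2 *ᵥ x) i
    have hab : (R2ᵀᵀ *ᵥ x) i = b := by simp [b]
    rw [hab]
    have h1 := abs_le.mp (hσ i)
    have h2 : 0 ≤ (u i - σ i) * (ε * a + b)^2 := by nlinarith [sq_nonneg (ε*a+b)]
    have h3 : 0 ≤ (u i + σ i) * (ε * a - b)^2 := by nlinarith [sq_nonneg (ε*a-b)]
    have hε' : 0 < ε⁻¹ := inv_pos.mpr hε
    have key2 : ε * (u i * (a*a)) + ε⁻¹ * (u i * (b*b)) - (σ i * (a*b) + σ i * (b*a))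
        = ε⁻¹ * ((u i - σ i) * (ε*a+b)^2 + (u i + σ i) * (ε*a-b)^2) / 2 := by
      field_simp
      ring
    rw [key2]
    have := add_nonneg h2 h3
    positivity
end

section
/- Let 0 < α < 1, μ ≥ 1, N0 ≥ 0 and τa > ln μ / (−ln α). Then for any integers D ≥ z ≥ 0 and any χ satisfying χ ≤ N0 + (D − z)/τa, the bound μ^χ α^{D−z} ≤ μ^{N0} e^{−((−ln α) − (ln μ)/τa)(D − z)} holds, and the exponent coefficient (−ln α) − (ln μ)/τa is strictly positive. -/
theorem average_dwell_time_bound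
    (α μ τa N0 : ℝ) (hα0 : 0 < α) (hα1 : α < 1) (hμ : 1 ≤ μ) (hN0 : 0 ≤ N0)
    (hτ : τa > Real.log μ / (-Real.log α))
    (D z : ℕ) (hDz : z ≤ D) (χ : ℕ)
    (hχ : (χ : ℝ) ≤ N0 + ((D : ℝ) - (z : ℝ)) / τa) :
    μ ^ χ * α ^ (D - z) ≤
      μ ^ N0 * Real.exp (-((-Real.log α) - Real.log μ / τa) * ((D : ℝ) - (z : ℝ))) ∧
    0 < (-Real.log α) - Real.log μ / τa := by
  have hμ0 : (0:ℝ) < μ := lt_of_lt_of_le one_pos hμ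
  have hL : 0 < -Real.log α := by
    have := Real.log_neg hα0 hα1; linarith
  have hlogμ : 0 ≤ Real.log μ := Real.log_nonneg hμ
  have hτ0 : 0 < τa := lt_of_le_of_lt (div_nonneg hlogμ hL.le) hτ
  have hlt : Real.log μ < τa * (-Real.log α) := (div_lt_iff₀ hL).mp hτ
  have hpos : 0 < (-Real.log α) - Real.log μ / τa := by
    rw [sub_pos, div_lt_iff₀ hτ0]; linarith
  refine ⟨?_, hpos⟩
  have hcast : ((D - z : ℕ) : ℝ) = (D : ℝ) - (z : ℝ) := by
    rw [Nat.cast_sub hDz]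
  have hd : 0 ≤ (D : ℝ) - (z : ℝ) := by
    have : (z:ℝ) ≤ (D:ℝ) := by exact_mod_cast hDz
    linarith
  have h1 : μ ^ χ = Real.exp ((χ : ℝ) * Real.log μ) := by
    rw [← Real.exp_log hμ0, ← Real.exp_nat_mul, Real.exp_log hμ0]
  have h2 : α ^ (D - z) = Real.exp (((D:ℝ) - (z:ℝ)) * Real.log α) := by
    rw [← Real.exp_log hα0, ← Real.exp_nat_mul, Real.exp_log hα0, hcast]
  have h3 : μ ^ N0 = Real.exp (N0 * Real.log μ) := by
    rw [Real.rpow_def_of_pos hμ0, mul_comm]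
  rw [h1, h2, h3, ← Real.exp_add, ← Real.exp_add]
  apply Real.exp_le_exp.mpr
  have hmul := mul_le_mul_of_nonneg_right hχ hlogμ
  have hfield : (N0 + ((D : ℝ) - (z : ℝ)) / τa) * Real.log μ
      = N0 * Real.log μ + ((D:ℝ) - (z:ℝ)) * (Real.log μ / τa) := by
    field_simp
  nlinarith [hmul, hfield]
end
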